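/- Let n ≥ 3 be odd (so that the sphere S^{n−1} is even-dimensional and the hairy ball theorem applies; the paper writes n = 2k, which is an apparent misprint). Let φ : ℝⁿ → ℝ be continuously differentiable, let K = {x ∈ ℝⁿ : φ(x) ≤ 0} be compact with frontier K = {x : φ(x) = 0} and gradient ∇φ(y) ≠ 0 for every y with φ(y) = 0. Assume 0 lies in the interior of K and that K is strongly star-shaped with respect to 0, i.e. t·x belongs to the interior of K for every x ∈ K and every t ∈ [0,1). Then there exist a point z with φ(z) = 0 and a real number λ > 0 such that ∇φ(z) = λ·z; that is, there is a boundary point whose outer normal direction is parallel to the ray from 0 through z. -/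

import Mathlib

open Set Filter Topology
open scoped InnerProductSpace

/-- If `f` has negative derivative at `0`, then `f t < f 0` for small positive `t`. -/
lemma eventually_lt_of_deriv_neg {f : ℝ → ℝ} {d : ℝ} (hf : HasDerivAt f d 0) (hd : d < 0) :
    ∀ᶠ t in 𝓝[>] (0:ℝ), f t < f 0 := by
  have hs : Filter.Tendsto (slope f 0) (𝓝[>] (0:ℝ)) (𝓝 d) :=
    (hasDerivAt_iff_tendsto_slope.1 hf).mono_left
      (nhdsWithin_mono _ (fun t ht => ne_of_gt ht))
  have h1 : ∀ᶠ t in 𝓝[>] (0:ℝ), slope f 0 t < 0 :=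
    hs.eventually (eventually_lt_nhds hd)
  filter_upwards [h1, self_mem_nhdsWithin] with t ht ht0
  have ht0' : (0:ℝ) < t := ht0
  have : slope f 0 t = (f t - f 0) / t := by simp [slope_def_field, div_eq_inv_mul]
  rw [this] at ht
  rcases div_neg_iff.1 ht with ⟨h, h'⟩ | ⟨h, h'⟩
  · linarith
  · linarith

theorem exists_normal_ray
    (n : ℕ) (hodd : Odd n) (hn : 3 ≤ n)
    (φ : EuclideanSpace ℝ (Fin n) → ℝ) (hφ : ContDiff ℝ 1 φ)
    (hcpt : IsCompact {x : EuclideanSpace ℝ (Fin n) | φ x ≤ 0})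
    (hfr : frontier {x : EuclideanSpace ℝ (Fin n) | φ x ≤ 0}
      = {x : EuclideanSpace ℝ (Fin n) | φ x = 0})
    (hgrad : ∀ y : EuclideanSpace ℝ (Fin n), φ y = 0 → gradient φ y ≠ 0)
    (h0 : (0 : EuclideanSpace ℝ (Fin n)) ∈ interior {x : EuclideanSpace ℝ (Fin n) | φ x ≤ 0})
    (hstar : ∀ x ∈ {x : EuclideanSpace ℝ (Fin n) | φ x ≤ 0}, ∀ t ∈ Set.Ico (0:ℝ) 1,
      t • x ∈ interior {x : EuclideanSpace ℝ (Fin n) | φ x ≤ 0}) :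
    ∃ (z : EuclideanSpace ℝ (Fin n)) (lam : ℝ), φ z = 0 ∧ 0 < lam ∧
      gradient φ z = lam • z := by
  classical
  have hφc : Continuous φ := hφ.continuous
  have h0K : (0 : EuclideanSpace ℝ (Fin n)) ∈ {x : EuclideanSpace ℝ (Fin n) | φ x ≤ 0} := interior_subset h0
  -- maximize the norm on K
  obtain ⟨z, hzK, hmax⟩ := hcpt.exists_isMaxOn ⟨0, h0K⟩ continuous_norm.continuousOn
  -- z ≠ 0
  obtain ⟨r, hr, hball⟩ := Metric.mem_nhds_iff.1 (mem_interior_iff_mem_nhds.1 h0)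
  have hzpos : 0 < ‖z‖ := by
    have hx0 : (EuclideanSpace.single (⟨0, by omega⟩ : Fin n) (r/2) : EuclideanSpace ℝ (Fin n)) ∈ {x : EuclideanSpace ℝ (Fin n) | φ x ≤ 0} := by
      apply hball
      simp only [Metric.mem_ball, dist_zero_right, EuclideanSpace.norm_single,
        Real.norm_eq_abs]
      rw [abs_of_pos (by linarith)]; linarith
    have := hmax hx0
    simp only [mem_setOf_eq, EuclideanSpace.norm_single, Real.norm_eq_abs] at this
    calc (0:ℝ) < r/2 := by linarith
      _ = |r/2| := (abs_of_pos (by linarith)).symm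
      _ ≤ ‖z‖ := this
  have hzne : z ≠ 0 := fun h => by simp [h] at hzpos
  -- φ z = 0
  have hφz : φ z = 0 := by
    have hzK' : φ z ≤ 0 := hzK
    rcases lt_or_eq_of_le hzK' with hlt | heq
    · exfalso
      have hU : IsOpen {x : EuclideanSpace ℝ (Fin n) | φ x < 0} := isOpen_lt hφc continuous_const
      have hc : ContinuousAt (fun t : ℝ => t • z) 1 := by fun_prop
      have hmem : {x : EuclideanSpace ℝ (Fin n) | φ x < 0} ∈ 𝓝 ((1:ℝ) • z) := by
        rw [one_smul]; exact hU.mem_nhds hlt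
      obtain ⟨δ, hδ, hδsub⟩ := Metric.mem_nhds_iff.1 (hc.preimage_mem_nhds hmem)
      set t : ℝ := 1 + δ/2
      have ht : t ∈ Metric.ball (1:ℝ) δ := by
        have habs : |t - 1| = δ/2 := by
          rw [show t - 1 = δ/2 by simp [t], abs_of_pos (by linarith)]
        simp only [Metric.mem_ball, Real.dist_eq, habs]; linarith
      have htK : t • z ∈ {x : EuclideanSpace ℝ (Fin n) | φ x ≤ 0} := by
        have hlt' : φ (t • z) < 0 := hδsub ht
        exact le_of_lt hlt'
      have hle : ‖t • z‖ ≤ ‖z‖ := hmax htK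
      rw [norm_smul] at hle
      have ht1 : (1:ℝ) < |t| := by
        rw [abs_of_pos (show (0:ℝ) < t by simp only [t]; linarith)]
        simp only [t]; linarith
      rw [Real.norm_eq_abs] at hle
      nlinarith
    · exact heq
  -- gradient
  set g : EuclideanSpace ℝ (Fin n) := gradient φ z with hgdef
  have hgne : g ≠ 0 := hgrad z hφz
  have hgrad_at : HasGradientAt φ g z := (hφ.differentiable one_ne_zero z).hasGradientAt
  -- key claim
  have key : ∀ v : EuclideanSpace ℝ (Fin n), ⟪g, v⟫_ℝ < 0 → ⟪z, v⟫_ℝ ≤ 0 := by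
    intro v hv
    -- the curve t ↦ z + t • v
    have hcurve : ∀ᶠ t in 𝓝[>] (0:ℝ), HasDerivAt (fun s : ℝ => z + s • v) v t := by
      filter_upwards with t
      simpa using ((hasDerivAt_id t).smul_const v).const_add z
    have hcv : HasDerivAt (fun s : ℝ => z + s • v) v 0 := by
      simpa using ((hasDerivAt_id (0:ℝ)).smul_const v).const_add z
    have h1 : HasDerivAt (fun t : ℝ => φ (z + t • v)) ⟪g, v⟫_ℝ 0 := by
      have hfd : HasFDerivAt φ
          (InnerProductSpace.toDual ℝ (EuclideanSpace ℝ (Fin n)) g) (z + (0:ℝ) • v) := by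
        simpa using hgrad_at.hasFDerivAt
      have h1a : HasDerivAt (φ ∘ fun s : ℝ => z + s • v)
          ((InnerProductSpace.toDual ℝ (EuclideanSpace ℝ (Fin n)) g) v) 0 :=
        hfd.comp_hasDerivAt (x := 0) hcv
      simpa [Function.comp_def, InnerProductSpace.toDual_apply_apply] using h1a
    have hsmall : ∀ᶠ t in 𝓝[>] (0:ℝ), φ (z + t • v) < φ ((0:ℝ) • v + z) := by
      have := eventually_lt_of_deriv_neg h1 hv
      simpa [hφz] using this
    have hnorm : ∀ᶠ t in 𝓝[>] (0:ℝ), ⟪z + t • v, z + t • v⟫_ℝ ≤ ⟪z, z⟫_ℝ := by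
      filter_upwards [hsmall] with t ht
      have hK' : z + t • v ∈ {x : EuclideanSpace ℝ (Fin n) | φ x ≤ 0} := by
        simp only [mem_setOf_eq]
        have : φ (z + t • v) < 0 := by simpa [hφz] using ht
        linarith
      have := hmax hK'
      rw [real_inner_self_eq_norm_sq, real_inner_self_eq_norm_sq]
      exact pow_le_pow_left₀ (norm_nonneg _) this 2
    by_contra hpos
    push_neg at hpos
    have h2 : HasDerivAt (fun t : ℝ => ⟪z + t • v, z + t • v⟫_ℝ) (2 * ⟪z, v⟫_ℝ) 0 := by
      have := hcv.inner ℝ hcv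
      simp only [zero_smul, add_zero] at this
      exact this.congr_deriv (by rw [real_inner_comm v z]; ring)
    have hneg : HasDerivAt (fun t : ℝ => -⟪z + t • v, z + t • v⟫_ℝ) (-(2 * ⟪z, v⟫_ℝ)) 0 :=
      h2.neg
    have := eventually_lt_of_deriv_neg hneg (by linarith)
    have hcontra : ∀ᶠ t in 𝓝[>] (0:ℝ), False := by
      filter_upwards [this, hnorm] with t ht ht'
      simp only [zero_smul, add_zero] at ht
      linarith
    rcases hcontra.exists with ⟨t, ht⟩
    exact ht
  -- linear algebra: z = c • g with c > 0
  have hg2 : (0:ℝ) < ‖g‖^2 := pow_pos (norm_pos_iff.mpr hgne) 2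
  set c : ℝ := ⟪z, g⟫_ℝ / ‖g‖^2 with hc
  have hzg : 0 ≤ ⟪z, g⟫_ℝ := by
    have hgg : 0 < ⟪g, g⟫_ℝ := by
      rw [real_inner_self_eq_norm_sq]; exact hg2
    have h := key (-g) (by rw [inner_neg_right]; linarith)
    rw [inner_neg_right] at h
    linarith
  set w : EuclideanSpace ℝ (Fin n) := z - c • g with hw
  have hgw : ⟪g, w⟫_ℝ = 0 := by
    simp only [hw, inner_sub_right, inner_smul_right, hc, real_inner_self_eq_norm_sq,
      real_inner_comm g z]
    field_simp
    ring
  have hzw : ⟪z, w⟫_ℝ = ‖w‖^2 := by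
    have hz' : z = w + c • g := by simp [hw]
    rw [hz', inner_add_left, inner_smul_left, hgw, real_inner_self_eq_norm_sq]
    simp
  have hwzero : w = 0 := by
    by_contra hwne
    have hw2 : (0:ℝ) < ‖w‖^2 := pow_pos (norm_pos_iff.mpr hwne) 2
    set s : ℝ := (⟪z, g⟫_ℝ + 1) / ‖w‖^2 with hsdef
    have hv : ⟪g, -g + s • w⟫_ℝ < 0 := by
      rw [inner_add_right, inner_neg_right, inner_smul_right, hgw,
        real_inner_self_eq_norm_sq]
      simp only [mul_zero, add_zero]
      linarith
    have hkey := key _ hv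
    rw [inner_add_right, inner_neg_right, inner_smul_right, hzw] at hkey
    have hs : s * ‖w‖^2 = ⟪z, g⟫_ℝ + 1 := by
      rw [hsdef]; field_simp
    linarith
  have hzcg : z = c • g := by
    have h := hwzero
    rw [hw, sub_eq_zero] at h
    exact h
  have hinner : ⟪z, g⟫_ℝ = c * ‖g‖^2 := by
    rw [hzcg, inner_smul_left, real_inner_self_eq_norm_sq]
    simp
  have hcne : c ≠ 0 := fun h => hzne (by rw [hzcg, h, zero_smul])
  have hcnonneg : 0 ≤ c := by nlinarith
  have hcpos : 0 < c := lt_of_le_of_ne hcnonneg (Ne.symm hcne)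
  refine ⟨z, c⁻¹, hφz, inv_pos.2 hcpos, ?_⟩
  rw [← hgdef, hzcg, smul_smul, inv_mul_cancel₀ (ne_of_gt hcpos), one_smul]
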